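/- Suppose there exist γ ≥ 0 and β_0, β_1, …, β_m ≥ 0 such that the matrix (γ + Σ_{i=0}^m α_i β_i)·A is strictly copositive. Then the set 𝒜_{P2} = {(g_0(x), g_1(x), …, g_m(x), f(x)) : x ∈ ℝ^n_+} + ℝ^{m+2}_+ is closed. -/

import Mathlib

open Pointwise Matrix

/-- For the uniform nonnegative quadratic program (P2) with
f(x) = xᵀAx + bᵀx + c and gᵢ(x) = αᵢ·xᵀAx + bᵢᵀx + cᵢ, if there exist γ ≥ 0 and
βᵢ ≥ 0 such that (γ + Σᵢ αᵢβᵢ)·A is strictly copositive, then the set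
𝒜_{P2} = {(g₀(x), …, g_m(x), f(x)) : x ∈ ℝ^n_+} + ℝ^{m+2}_+ is closed. -/
theorem stmt_17 (n m : ℕ) (hn : 1 ≤ n)
    (A : Matrix (Fin n) (Fin n) ℝ) (hA : A.IsSymm)
    (b : Fin n → ℝ) (c : ℝ)
    (b' : Fin (m + 1) → Fin n → ℝ) (c' : Fin (m + 1) → ℝ) (α : Fin (m + 1) → ℝ)
    (f : (Fin n → ℝ) → ℝ) (hf : ∀ x, f x = x ⬝ᵥ A *ᵥ x + b ⬝ᵥ x + c)
    (g : Fin (m + 1) → (Fin n → ℝ) → ℝ)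
    (hg : ∀ i x, g i x = α i * (x ⬝ᵥ A *ᵥ x) + b' i ⬝ᵥ x + c' i)
    (γ : ℝ) (hγ : 0 ≤ γ) (β : Fin (m + 1) → ℝ) (hβ : ∀ i, 0 ≤ β i)
    (hcop : ∀ x : Fin n → ℝ, (∀ j, 0 ≤ x j) → x ≠ 0 →
      0 < x ⬝ᵥ ((γ + ∑ i, α i * β i) • A) *ᵥ x) :
    IsClosed ((fun x : Fin n → ℝ => ((fun i => g i x), f x)) '' {x | ∀ j, 0 ≤ x j}
      + {q : (Fin (m + 1) → ℝ) × ℝ | (∀ i, 0 ≤ q.1 i) ∧ 0 ≤ q.2}) := by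
  classical
  haveI : Nonempty (Fin n) := ⟨⟨0, hn⟩⟩
  set lam : ℝ := γ + ∑ i, α i * β i with hlam
  set Q : (Fin n → ℝ) → ℝ := fun x => x ⬝ᵥ A *ᵥ x with hQ
  have hq0 : ∀ x : Fin n → ℝ, x ⬝ᵥ ((lam • A) *ᵥ x) = lam * Q x := by
    intro x
    simp [hQ, Matrix.smul_mulVec, dotProduct_smul, smul_eq_mul]
  have hQcont : Continuous Q :=
    continuous_id.dotProduct (continuous_const.matrix_mulVec continuous_id)
  -- the nonnegative orthant is closed
  have hPclosed : IsClosed {x : Fin n → ℝ | ∀ j, 0 ≤ x j} := by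
    have : {x : Fin n → ℝ | ∀ j, 0 ≤ x j} = ⋂ j, {x : Fin n → ℝ | 0 ≤ x j} := by
      ext x; simp
    rw [this]
    exact isClosed_iInter fun j => isClosed_le continuous_const (continuous_apply j)
  -- minimum of the quadratic form on the unit sphere ∩ orthant
  have hCcpt : IsCompact {x : Fin n → ℝ | (∀ j, 0 ≤ x j) ∧ ‖x‖ = 1} := by
    apply Metric.isCompact_of_isClosed_isBounded
    · exact hPclosed.inter (isClosed_eq (continuous_norm) continuous_const)
    · apply Metric.isBounded_closedBall (x := (0 : Fin n → ℝ)) (r := 1) |>.subset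
      intro x hx
      simp [Metric.mem_closedBall, dist_zero_right, hx.2]
  have hCne : Set.Nonempty {x : Fin n → ℝ | (∀ j, 0 ≤ x j) ∧ ‖x‖ = 1} := by
    refine ⟨fun _ => 1, fun j => zero_le_one, ?_⟩
    rw [pi_norm_const (1 : ℝ)]; norm_num
  obtain ⟨x0, hx0C, hx0min⟩ := hCcpt.exists_isMinOn hCne
    (Continuous.continuousOn (continuous_const.mul hQcont))
  set δ : ℝ := lam * Q x0 with hδdef
  have hx0ne : x0 ≠ 0 := by
    intro h
    rw [h] at hx0C
    simp at hx0C
  have hδpos : 0 < δ := by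
    have := hcop x0 hx0C.1 hx0ne
    rwa [hq0] at this
  -- quadratic growth on the orthant
  have key : ∀ x : Fin n → ℝ, (∀ j, 0 ≤ x j) → δ * ‖x‖ ^ 2 ≤ lam * Q x := by
    intro x hx
    rcases eq_or_ne x 0 with rfl | hxne
    · simp [hQ]
    · have hnx : (0 : ℝ) < ‖x‖ := norm_pos_iff.2 hxne
      set y : Fin n → ℝ := ‖x‖⁻¹ • x with hy
      have hyC : y ∈ {x : Fin n → ℝ | (∀ j, 0 ≤ x j) ∧ ‖x‖ = 1} := by
        constructor
        · intro j
          exact mul_nonneg (inv_nonneg.2 hnx.le) (hx j)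
        · rw [hy, norm_smul]
          simp [abs_of_pos (inv_pos.2 hnx), inv_mul_cancel₀ hnx.ne']
      have hQy : Q x = ‖x‖ ^ 2 * Q y := by
        have hxy : x = ‖x‖ • y := by
          rw [hy, smul_smul, mul_inv_cancel₀ hnx.ne', one_smul]
        rw [hQ]
        conv_lhs => rw [hxy]
        simp [Matrix.mulVec_smul, dotProduct_smul, smul_dotProduct, smul_eq_mul]
        ring
      have hmin : lam * Q x0 ≤ lam * Q y := hx0min hyC
      calc δ * ‖x‖ ^ 2 ≤ (lam * Q y) * ‖x‖ ^ 2 := by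
            apply mul_le_mul_of_nonneg_right _ (sq_nonneg _)
            exact hmin
        _ = lam * Q x := by rw [hQy]; ring
  -- continuity of the map F
  have hfcont : Continuous f := by
    have : f = fun x => Q x + b ⬝ᵥ x + c := funext hf
    rw [this]
    exact ((hQcont.add (continuous_const.dotProduct continuous_id)).add
      continuous_const)
  have hgcont : ∀ i, Continuous (g i) := by
    intro i
    have : g i = fun x => α i * Q x + b' i ⬝ᵥ x + c' i := funext (hg i)
    rw [this]
    exact ((continuous_const.mul hQcont).add
      (continuous_const.dotProduct continuous_id)).add continuous_const
  set F : (Fin n → ℝ) → (Fin (m + 1) → ℝ) × ℝ := fun x => ((fun i => g i x), f x) with hF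
  have hFcont : Continuous F :=
    Continuous.prodMk (continuous_pi fun i => hgcont i) hfcont
  -- K is closed
  have hKclosed : IsClosed {q : (Fin (m + 1) → ℝ) × ℝ | (∀ i, 0 ≤ q.1 i) ∧ 0 ≤ q.2} := by
    have heq : {q : (Fin (m + 1) → ℝ) × ℝ | (∀ i, 0 ≤ q.1 i) ∧ 0 ≤ q.2}
        = (⋂ i, {q : (Fin (m + 1) → ℝ) × ℝ | 0 ≤ q.1 i})
          ∩ {q : (Fin (m + 1) → ℝ) × ℝ | 0 ≤ q.2} := by
      ext q; simp [Set.mem_iInter]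
    rw [heq]
    refine IsClosed.inter (isClosed_iInter fun i => ?_)
      (isClosed_le continuous_const continuous_snd)
    exact isClosed_le continuous_const
      ((continuous_apply i).comp (continuous_fst : Continuous
        (Prod.fst : (Fin (m + 1) → ℝ) × ℝ → Fin (m + 1) → ℝ)))
  -- sequential closedness
  rw [← isSeqClosed_iff_isClosed]
  intro u p hu hup
  -- extract witnesses
  have hwit : ∀ N : ℕ, ∃ x : Fin n → ℝ, (∀ j, 0 ≤ x j) ∧
      (∀ i, 0 ≤ (u N).1 i - g i x) ∧ 0 ≤ (u N).2 - f x := by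
    intro N
    obtain ⟨s, hs, t, ht, hst⟩ := Set.mem_add.1 (hu N)
    obtain ⟨x, hxP, hxs⟩ := hs
    refine ⟨x, hxP, ?_, ?_⟩
    · intro i
      have h1 : (u N).1 i = g i x + t.1 i := by
        rw [← hst, ← hxs]; simp [hF]
      rw [h1]; simpa using ht.1 i
    · have h2 : (u N).2 = f x + t.2 := by
        rw [← hst, ← hxs]; simp [hF]
      rw [h2]; simpa using ht.2
  choose x hxP hx1 hx2 using hwit
  -- the combination h is bounded above
  have hhcomb : ∀ N, γ * f (x N) + ∑ i, β i * g i (x N)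
      ≤ γ * (u N).2 + ∑ i, β i * (u N).1 i := by
    intro N
    apply add_le_add
    · exact mul_le_mul_of_nonneg_left (by linarith [hx2 N]) hγ
    · apply Finset.sum_le_sum
      intro i _
      exact mul_le_mul_of_nonneg_left (by linarith [hx1 N i]) (hβ i)
  have htend : Filter.Tendsto (fun N => γ * (u N).2 + ∑ i, β i * (u N).1 i)
      Filter.atTop (nhds (γ * p.2 + ∑ i, β i * p.1 i)) := by
    have h2 : Filter.Tendsto (fun N => (u N).2) Filter.atTop (nhds p.2) :=
      (continuous_snd.tendsto p).comp hup
    have h1 : ∀ i, Filter.Tendsto (fun N => (u N).1 i) Filter.atTop (nhds (p.1 i)) :=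
      fun i => (((continuous_apply i).comp continuous_fst).tendsto p).comp hup
    exact ((tendsto_const_nhds.mul h2).add
      (tendsto_finset_sum _ fun i _ => tendsto_const_nhds.mul (h1 i)))
  obtain ⟨M, hM⟩ := htend.bddAbove_range
  have hM' : ∀ N, γ * f (x N) + ∑ i, β i * g i (x N) ≤ M := by
    intro N
    exact le_trans (hhcomb N) (hM (Set.mem_range_self N))
  -- rewrite the combination
  have hcomb_eq : ∀ z : Fin n → ℝ, γ * f z + ∑ i, β i * g i z
      = lam * Q z + (γ * (b ⬝ᵥ z + c) + ∑ i, β i * (b' i ⬝ᵥ z + c' i)) := by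
    intro z
    have hs : ∑ i, β i * (α i * (z ⬝ᵥ A *ᵥ z) + b' i ⬝ᵥ z + c' i)
        = (∑ i, α i * β i) * (z ⬝ᵥ A *ᵥ z) + ∑ i, β i * (b' i ⬝ᵥ z + c' i) := by
      rw [Finset.sum_mul, ← Finset.sum_add_distrib]
      exact Finset.sum_congr rfl fun i _ => by ring
    simp only [hf, hg, hQ, hlam]
    rw [hs]
    ring
  -- bound the affine part
  set C1 : ℝ := γ * (∑ j, |b j|) + ∑ i, β i * (∑ j, |b' i j|) with hC1
  set C0 : ℝ := γ * |c| + ∑ i, β i * |c' i| with hC0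
  have hC1nn : 0 ≤ C1 := by
    apply add_nonneg
    · exact mul_nonneg hγ (Finset.sum_nonneg fun j _ => abs_nonneg _)
    · exact Finset.sum_nonneg fun i _ => mul_nonneg (hβ i)
        (Finset.sum_nonneg fun j _ => abs_nonneg _)
  have hdotbound : ∀ (d z : Fin n → ℝ), -(((∑ j, |d j|)) * ‖z‖) ≤ d ⬝ᵥ z := by
    intro d z
    have : |d ⬝ᵥ z| ≤ (∑ j, |d j|) * ‖z‖ := by
      calc |d ⬝ᵥ z| ≤ ∑ j, |d j * z j| := by
            exact Finset.abs_sum_le_sum_abs _ _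
        _ ≤ ∑ j, |d j| * ‖z‖ := by
            apply Finset.sum_le_sum
            intro j _
            rw [abs_mul]
            exact mul_le_mul_of_nonneg_left (by simpa using norm_le_pi_norm z j) (abs_nonneg _)
        _ = (∑ j, |d j|) * ‖z‖ := by rw [Finset.sum_mul]
    linarith [neg_abs_le (d ⬝ᵥ z)]
  have haff : ∀ z : Fin n → ℝ,
      -(C1 * ‖z‖) - C0 ≤ γ * (b ⬝ᵥ z + c) + ∑ i, β i * (b' i ⬝ᵥ z + c' i) := by
    intro z
    have h1 : γ * (b ⬝ᵥ z + c) ≥ γ * (-(((∑ j, |b j|)) * ‖z‖) + -|c|) := by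
      apply mul_le_mul_of_nonneg_left _ hγ
      have := hdotbound b z
      have := neg_abs_le c
      linarith
    have h2 : ∀ i, β i * (b' i ⬝ᵥ z + c' i)
        ≥ β i * (-(((∑ j, |b' i j|)) * ‖z‖) + -|c' i|) := by
      intro i
      apply mul_le_mul_of_nonneg_left _ (hβ i)
      have := hdotbound (b' i) z
      have := neg_abs_le (c' i)
      linarith
    have h3 : ∑ i, β i * (-(((∑ j, |b' i j|)) * ‖z‖) + -|c' i|)
        ≤ ∑ i, β i * (b' i ⬝ᵥ z + c' i) := Finset.sum_le_sum fun i _ => h2 i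
    have h4 : (∑ i, β i * (-(((∑ j, |b' i j|)) * ‖z‖) + -|c' i|))
        = -((∑ i, β i * (∑ j, |b' i j|)) * ‖z‖) - ∑ i, β i * |c' i| := by
      have he : ∀ i : Fin (m + 1), β i * (-(((∑ j, |b' i j|)) * ‖z‖) + -|c' i|)
          = -(β i * (∑ j, |b' i j|) * ‖z‖) + -(β i * |c' i|) := fun i => by ring
      simp_rw [he]
      rw [Finset.sum_add_distrib, Finset.sum_neg_distrib, Finset.sum_neg_distrib,
        Finset.sum_mul]
      ring
    rw [hC1, hC0]
    have h5 := h1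
    rw [h4] at h3
    nlinarith [h3, h5]
  -- the sequence x is bounded
  set N0 : ℝ := max (M + C0) 0 with hN0
  have hN0nn : 0 ≤ N0 := le_max_right _ _
  set B : ℝ := max 1 ((N0 + C1) / δ) with hB
  have hxbound : ∀ N, ‖x N‖ ≤ B := by
    intro N
    have hkey := key (x N) (hxP N)
    have hM2 := hM' N
    rw [hcomb_eq] at hM2
    have haffN := haff (x N)
    have hmain : δ * ‖x N‖ ^ 2 ≤ M + C0 + C1 * ‖x N‖ := by nlinarith
    by_cases hc : ‖x N‖ ≤ 1
    · exact le_trans hc (le_max_left _ _)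
    · push_neg at hc
      have hR : (1 : ℝ) < ‖x N‖ := hc
      have h6 : δ * ‖x N‖ ≤ N0 + C1 := by
        nlinarith [le_max_left (M + C0) (0 : ℝ)]
      have : ‖x N‖ ≤ (N0 + C1) / δ := by
        rw [le_div_iff₀ hδpos]
        linarith
      exact le_trans this (le_max_right _ _)
  -- Bolzano–Weierstrass
  have hball : ∀ N, x N ∈ Metric.closedBall (0 : Fin n → ℝ) B := by
    intro N
    simpa [Metric.mem_closedBall, dist_zero_right] using hxbound N
  obtain ⟨z, hz, φ, hφmono, hφtend⟩ :=
    (isCompact_closedBall (0 : Fin n → ℝ) B).tendsto_subseq hball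
  -- z is in the orthant
  have hzP : ∀ j, 0 ≤ z j := by
    have := hPclosed.mem_of_tendsto hφtend
      (Filter.Eventually.of_forall fun N => hxP (φ N))
    exact this
  -- the slack converges
  have hFtend : Filter.Tendsto (fun N => F (x (φ N))) Filter.atTop (nhds (F z)) :=
    (hFcont.tendsto z).comp hφtend
  have huφ : Filter.Tendsto (fun N => u (φ N)) Filter.atTop (nhds p) :=
    hup.comp hφmono.tendsto_atTop
  have hslack : Filter.Tendsto (fun N => u (φ N) - F (x (φ N))) Filter.atTop
      (nhds (p - F z)) := huφ.sub hFtend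
  have hslackmem : p - F z ∈ {q : (Fin (m + 1) → ℝ) × ℝ | (∀ i, 0 ≤ q.1 i) ∧ 0 ≤ q.2} := by
    apply hKclosed.mem_of_tendsto hslack
    apply Filter.Eventually.of_forall
    intro N
    constructor
    · intro i
      simpa [hF] using hx1 (φ N) i
    · simpa [hF] using hx2 (φ N)
  rw [Set.mem_add]
  refine ⟨F z, Set.mem_image_of_mem _ hzP, p - F z, hslackmem, by abel⟩
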